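/- For any separable bipartite state ρ_AB on a finite-dimensional Hilbert space, the local entropies do not exceed the global entropy: H(ρ_A) ≤ H(ρ_AB) and H(ρ_B) ≤ H(ρ_AB). -/

import Mathlib

open Matrix BigOperators Kronecker
open scoped Classical ComplexOrder

namespace QCap

/-- The square root of a positive semidefinite matrix, as `Matrix.PosSemidef.sqrt` was defined in
the older Mathlib. -/
noncomputable def psdSqrt {n : Type*} [Fintype n] [DecidableEq n] {A : Matrix n n ℂ}
    (hA : A.PosSemidef) : Matrix n n ℂ :=
  hA.1.eigenvectorUnitary.1 * diagonal ((↑) ∘ (√·) ∘ hA.1.eigenvalues) *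
    (star hA.1.eigenvectorUnitary : Matrix n n ℂ)

/-- Trace norm: `‖A‖₁ = tr √(AᴴA)`. -/
noncomputable def traceNorm {ι : Type*} [Fintype ι] [DecidableEq ι] (A : Matrix ι ι ℂ) : ℝ :=
  ((psdSqrt (Matrix.posSemidef_conjTranspose_mul_self A)).trace).re

/-- Trace distance `D_t(ρ,σ) = ‖ρ-σ‖₁ / 2`. -/
noncomputable def traceDist {ι : Type*} [Fintype ι] [DecidableEq ι] (ρ σ : Matrix ι ι ℂ) : ℝ :=
  traceNorm (ρ - σ) / 2

/-- von Neumann entropy via eigenvalues, `H(ρ) = -∑ λᵢ log λᵢ`. -/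
noncomputable def vnEntropy {ι : Type*} [Fintype ι] [DecidableEq ι] (ρ : Matrix ι ι ℂ) : ℝ :=
  if h : ρ.IsHermitian then ∑ i, Real.negMulLog (h.eigenvalues i) else 0

/-- A density operator: positive semidefinite with unit trace. -/
def IsDensity {ι : Type*} [Fintype ι] (ρ : Matrix ι ι ℂ) : Prop :=
  ρ.PosSemidef ∧ ρ.trace = 1

/-- Kraus condition `∑ Kᵢᴴ Kᵢ = 1` (trace preservation for a CP map). -/
def IsKraus {ι κ α : Type*} [Fintype ι] [DecidableEq ι] [Fintype κ] [Fintype α]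
    (K : κ → Matrix α ι ℂ) : Prop :=
  ∑ k, (K k)ᴴ * K k = 1

/-- Channel action `Φ(ρ) = ∑ Kᵢ ρ Kᵢᴴ`. -/
noncomputable def channelApply {ι κ α : Type*} [Fintype ι] [Fintype κ]
    (K : κ → Matrix α ι ℂ) (ρ : Matrix ι ι ℂ) : Matrix α α ℂ :=
  ∑ k, K k * ρ * (K k)ᴴ

/-- Choi state `ω_Φ = (Φ ⊗ id)(|ω⟩⟨ω|)` with `|ω⟩ = (1/√d) ∑ᵢ |ii⟩`. -/
noncomputable def choiState {ι κ α : Type*} [Fintype ι] [DecidableEq ι] [Fintype κ]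
    (K : κ → Matrix α ι ℂ) : Matrix (α × ι) (α × ι) ℂ :=
  (Fintype.card ι : ℂ)⁻¹ •
    ∑ i : ι, ∑ j : ι,
      (channelApply K (Matrix.single i j 1)) ⊗ₖ (Matrix.single i j 1)

/-- Partial trace over the first tensor factor. -/
noncomputable def ptraceFst {α β : Type*} [Fintype α]
    (M : Matrix (α × β) (α × β) ℂ) : Matrix β β ℂ :=
  Matrix.of fun i j => ∑ a, M (a, i) (a, j)

/-- Partial trace over the second tensor factor. -/
noncomputable def ptraceSnd {α β : Type*} [Fintype β]
    (M : Matrix (α × β) (α × β) ℂ) : Matrix α α ℂ :=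
  Matrix.of fun a b => ∑ i, M (a, i) (b, i)

/-- Fidelity `F(ρ,σ) = (tr √(√ρ σ √ρ))²`. -/
noncomputable def fidelity {ι : Type*} [Fintype ι] [DecidableEq ι] (ρ σ : Matrix ι ι ℂ) : ℝ :=
  if hρ : ρ.PosSemidef then
    if h : (psdSqrt hρ * σ * psdSqrt hρ).PosSemidef then (((psdSqrt h).trace).re) ^ 2 else 0
  else 0

/-- Coherent information of the channel at the maximally mixed input:
`I(Φ) = H(Φ(π_d)) - H(ω_Φ)`. -/
noncomputable def cohInfo {ι κ α : Type*} [Fintype ι] [DecidableEq ι] [Fintype κ]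
    [Fintype α] [DecidableEq α] (K : κ → Matrix α ι ℂ) : ℝ :=
  vnEntropy (channelApply K ((Fintype.card ι : ℂ)⁻¹ • (1 : Matrix ι ι ℂ)))
    - vnEntropy (choiState K)

end QCap

namespace QCap
open Matrix Kronecker

/-- A bipartite state is separable if it is a finite convex combination of
product states. -/
def IsSeparable {α β : Type*} [Fintype α] [Fintype β]
    (M : Matrix (α × β) (α × β) ℂ) : Prop :=
  ∃ (n : ℕ) (q : Fin n → ℝ) (σ : Fin n → Matrix α α ℂ) (τ : Fin n → Matrix β β ℂ),
    (∀ k, 0 ≤ q k) ∧ (∑ k, q k = 1) ∧ (∀ k, IsDensity (σ k)) ∧ (∀ k, IsDensity (τ k)) ∧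
    M = ∑ k, (q k : ℂ) • (σ k ⊗ₖ τ k)

end QCap

namespace QCap
open Matrix Kronecker
section charpolyStuff
open Polynomial

variable {n m : Type*} [Fintype n] [DecidableEq n] [Fintype m] [DecidableEq m]

lemma charpoly_conj_aux (S M T : Matrix n n ℂ) (hST : S * T = 1) :
    (S * M * T).charpoly = M.charpoly := by
  have hmap : ∀ (P Q : Matrix n n ℂ), (P * Q).map Polynomial.C = P.map Polynomial.C * Q.map Polynomial.C := by
    intro P Q
    exact Matrix.map_mul (f := (Polynomial.C : ℂ →+* ℂ[X]))
  have hone : (1 : Matrix n n ℂ).map Polynomial.C = 1 := Matrix.map_one _ (map_zero _) (map_one _)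
  have hcm : charmatrix (S * M * T) = S.map Polynomial.C * charmatrix M * T.map Polynomial.C := by
    unfold charmatrix
    rw [Matrix.mul_sub, Matrix.sub_mul]
    congr 1
    · -- S' * scalar X * T' = scalar X
      have : (Matrix.scalar n (X : ℂ[X])) * T.map Polynomial.C = T.map Polynomial.C * Matrix.scalar n (X : ℂ[X]) :=
        (Matrix.scalar_commute (X : ℂ[X]) (fun r => Commute.all _ r) (T.map Polynomial.C)).eq
      rw [Matrix.mul_assoc, this, ← Matrix.mul_assoc, ← hmap, hST, hone, Matrix.one_mul]
    · simp only [RingHom.mapMatrix_apply, ← hmap, Matrix.mul_assoc]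
  have hdet : (S.map Polynomial.C).det * (T.map Polynomial.C).det = 1 := by
    rw [← Matrix.det_mul, ← hmap, hST, hone, Matrix.det_one]
  unfold Matrix.charpoly
  rw [hcm, Matrix.det_mul, Matrix.det_mul]
  ring_nf
  rw [mul_comm, ← mul_assoc]
  rw [mul_comm ((T.map Polynomial.C).det)]
  rw [hdet, one_mul]

lemma charpoly_diagonal' (d : n → ℂ) :
    (Matrix.diagonal d).charpoly = ∏ i, (X - C (d i)) := by
  unfold Matrix.charpoly
  have : charmatrix (Matrix.diagonal d) = Matrix.diagonal (fun i => (X : ℂ[X]) - C (d i)) := by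
    ext i j
    by_cases h : i = j
    · subst h; simp
    · simp [h, Matrix.diagonal_apply_ne _ h]
  rw [this, Matrix.det_diagonal]

lemma charpoly_zero' : (0 : Matrix n n ℂ).charpoly = X ^ (Fintype.card n) := by
  have : (0 : Matrix n n ℂ) = Matrix.diagonal (fun _ => 0) := by simp
  rw [this, charpoly_diagonal']
  simp [Finset.card_univ]

lemma charpoly_hermitian {M : Matrix n n ℂ} (h : M.IsHermitian) :
    M.charpoly = ∏ i, (X - C ((h.eigenvalues i : ℝ) : ℂ)) := by
  conv_lhs => rw [h.spectral_theorem]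
  rw [Unitary.conjStarAlgAut_apply, Matrix.star_eq_conjTranspose]
  rw [charpoly_conj_aux _ _ _ (by
    rw [← Matrix.star_eq_conjTranspose]
    exact (Matrix.mem_unitaryGroup_iff).mp h.eigenvectorUnitary.2)]
  rw [charpoly_diagonal']
  rfl

lemma roots_charpoly_hermitian {M : Matrix n n ℂ} (h : M.IsHermitian) :
    M.charpoly.roots = Finset.univ.val.map (fun i => ((h.eigenvalues i : ℝ) : ℂ)) := by
  rw [charpoly_hermitian h]
  rw [← Polynomial.roots_multiset_prod_X_sub_C (Finset.univ.val.map (fun i => ((h.eigenvalues i : ℝ) : ℂ)))]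
  congr 1
  rw [Multiset.map_map]
  rfl

lemma vnEntropy_eq_of_charpoly {P : Matrix n n ℂ} {Q : Matrix m m ℂ}
    (hP : P.IsHermitian) (hQ : Q.IsHermitian) (a b : ℕ)
    (h : P.charpoly * X ^ a = Q.charpoly * X ^ b) :
    vnEntropy P = vnEntropy Q := by
  have hr : (P.charpoly * X ^ a).roots = (Q.charpoly * X ^ b).roots := by rw [h]
  rw [Polynomial.roots_mul (mul_ne_zero P.charpoly_monic.ne_zero (pow_ne_zero _ Polynomial.X_ne_zero)),
      Polynomial.roots_mul (mul_ne_zero Q.charpoly_monic.ne_zero (pow_ne_zero _ Polynomial.X_ne_zero)),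
      Polynomial.roots_pow, Polynomial.roots_pow, Polynomial.roots_X,
      roots_charpoly_hermitian hP, roots_charpoly_hermitian hQ] at hr
  have hzero : ∀ k : ℕ, ((k • ({0} : Multiset ℂ)).map (fun z : ℂ => Real.negMulLog z.re)).sum = 0 := by
    intro k
    rw [Multiset.nsmul_singleton, Multiset.map_replicate, Multiset.sum_replicate]
    simp
  have := congrArg (fun s : Multiset ℂ => (s.map (fun z : ℂ => Real.negMulLog z.re)).sum) hr
  simp only [Multiset.map_add, Multiset.sum_add, Multiset.map_map, Function.comp, hzero, add_zero] at this
  unfold vnEntropy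
  rw [dif_pos hP, dif_pos hQ]
  have e1 : ∑ i, Real.negMulLog (hP.eigenvalues i) =
      (Finset.univ.val.map (fun i => Real.negMulLog (((hP.eigenvalues i : ℝ) : ℂ)).re)).sum := by
    simp only [Complex.ofReal_re]; rfl
  have e2 : ∑ i, Real.negMulLog (hQ.eigenvalues i) =
      (Finset.univ.val.map (fun i => Real.negMulLog (((hQ.eigenvalues i : ℝ) : ℂ)).re)).sum := by
    simp only [Complex.ofReal_re]; rfl
  rw [e1, e2]
  exact this

end charpolyStuff
section part2'
open Matrix Polynomial

variable {n m : Type*} [Fintype n] [DecidableEq n] [Fintype m] [DecidableEq m]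

lemma charpoly_mul_conjTranspose (A : Matrix n m ℂ) :
    (A * Aᴴ).charpoly * X ^ (Fintype.card m) = (Aᴴ * A).charpoly * X ^ (Fintype.card n) := by
  have key : (fromBlocks (A * Aᴴ) 0 Aᴴ 0 : Matrix (n ⊕ m) (n ⊕ m) ℂ)
      = (fromBlocks 1 A 0 1) * (fromBlocks 0 0 Aᴴ (Aᴴ * A)) * (fromBlocks 1 (-A) 0 1) := by
    rw [Matrix.fromBlocks_multiply, Matrix.fromBlocks_multiply]
    congr 1 <;> simp [Matrix.mul_assoc]
  have hST : (fromBlocks 1 A 0 1 : Matrix (n ⊕ m) (n ⊕ m) ℂ) * (fromBlocks 1 (-A) 0 1) = 1 := by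
    rw [Matrix.fromBlocks_multiply]
    simp [Matrix.fromBlocks_one]
  have h1 : (fromBlocks (A * Aᴴ) 0 Aᴴ 0 : Matrix (n ⊕ m) (n ⊕ m) ℂ).charpoly
      = (A * Aᴴ).charpoly * X ^ (Fintype.card m) := by
    rw [Matrix.charpoly_fromBlocks_zero₁₂, charpoly_zero']
  have h2 : (fromBlocks 0 0 Aᴴ (Aᴴ * A) : Matrix (n ⊕ m) (n ⊕ m) ℂ).charpoly
      = X ^ (Fintype.card n) * (Aᴴ * A).charpoly := by
    rw [Matrix.charpoly_fromBlocks_zero₁₂, charpoly_zero']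
  rw [← h1, key, charpoly_conj_aux _ _ _ hST, h2, mul_comm]

lemma vnEntropy_mul_conjTranspose (A : Matrix n m ℂ) :
    vnEntropy (A * Aᴴ) = vnEntropy (Aᴴ * A) :=
  vnEntropy_eq_of_charpoly (Matrix.isHermitian_mul_conjTranspose_self A)
    (Matrix.isHermitian_conjTranspose_mul_self A) _ _ (charpoly_mul_conjTranspose A)

lemma vnEntropy_submatrix (e : n ≃ m) (M : Matrix m m ℂ) (hM : M.IsHermitian) :
    vnEntropy (M.submatrix e e) = vnEntropy M := by
  refine vnEntropy_eq_of_charpoly (hM.submatrix e) hM 0 0 ?_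
  have : M.submatrix e e = Matrix.reindex e.symm e.symm M := rfl
  rw [this, Matrix.charpoly_reindex]

end part2'
section part3'
set_option maxHeartbeats 1000000
open Matrix

lemma triple_apply {n m : Type*} [Fintype m] [DecidableEq m] (X : Matrix n m ℂ) (c : m → ℂ)
    (i k : n) :
    (X * Matrix.diagonal c * Xᴴ) i k = ∑ j, X i j * c j * (starRingEnd ℂ) (X k j) := by
  rw [Matrix.mul_apply]
  exact Finset.sum_congr rfl fun j _ => by
    rw [Matrix.mul_diagonal, Matrix.conjTranspose_apply]
    rfl

lemma vnEntropy_le_core {m' β : Type*} [Fintype m'] [DecidableEq m'] [Fintype β]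
    (N N' : Matrix m' m' ℂ) (hN : N.PosSemidef) (hN' : N'.IsHermitian)
    (D : β → Matrix m' m' ℂ)
    (hsum : N' = ∑ b, D b * N * (D b)ᴴ)
    (h1 : ∑ b, D b * (D b)ᴴ = 1)
    (h2 : ∑ b, (D b)ᴴ * D b = 1) :
    vnEntropy N ≤ vnEntropy N' := by
  classical
  have hNh : N.IsHermitian := hN.1
  set W : Matrix m' m' ℂ := (hNh.eigenvectorUnitary : Matrix m' m' ℂ) with hWdef
  set W' : Matrix m' m' ℂ := (hN'.eigenvectorUnitary : Matrix m' m' ℂ) with hW'def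
  set lam := hNh.eigenvalues with hlamdef
  set mu := hN'.eigenvalues with hmudef
  set M : β → Matrix m' m' ℂ := fun b => W'ᴴ * D b * W with hMdef
  have hWu : W * Wᴴ = 1 := by
    have := (Matrix.mem_unitaryGroup_iff).mp hNh.eigenvectorUnitary.2
    rwa [Matrix.star_eq_conjTranspose] at this
  have hWu' : Wᴴ * W = 1 := by
    have := (Matrix.mem_unitaryGroup_iff').mp hNh.eigenvectorUnitary.2
    rwa [Matrix.star_eq_conjTranspose] at this
  have hW'u : W' * W'ᴴ = 1 := by
    have := (Matrix.mem_unitaryGroup_iff).mp hN'.eigenvectorUnitary.2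
    rwa [Matrix.star_eq_conjTranspose] at this
  have hW'u' : W'ᴴ * W' = 1 := by
    have := (Matrix.mem_unitaryGroup_iff').mp hN'.eigenvectorUnitary.2
    rwa [Matrix.star_eq_conjTranspose] at this
  have hNspec : N = W * Matrix.diagonal (Complex.ofReal ∘ lam) * Wᴴ := by
    have := hNh.spectral_theorem
    rwa [Unitary.conjStarAlgAut_apply, Matrix.star_eq_conjTranspose] at this
  have diag' : W'ᴴ * N' * W' = Matrix.diagonal (Complex.ofReal ∘ mu) := by
    have := hN'.conjStarAlgAut_star_eigenvectorUnitary
    simp only [Unitary.conjStarAlgAut_apply, Unitary.coe_star, star_star,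
      Matrix.star_eq_conjTranspose, Matrix.conjTranspose_conjTranspose] at this
    exact this
  have keyM : Matrix.diagonal (Complex.ofReal ∘ mu)
      = ∑ b, M b * Matrix.diagonal (Complex.ofReal ∘ lam) * (M b)ᴴ := by
    rw [← diag', hsum, Matrix.mul_sum, Matrix.sum_mul]
    refine Finset.sum_congr rfl fun b _ => ?_
    show W'ᴴ * (D b * N * (D b)ᴴ) * W'
        = (W'ᴴ * D b * W) * Matrix.diagonal (Complex.ofReal ∘ lam) * (W'ᴴ * D b * W)ᴴ
    rw [hNspec]
    simp only [Matrix.conjTranspose_mul, Matrix.conjTranspose_conjTranspose]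
    noncomm_ring
  set d : m' → m' → ℝ := fun i j => ∑ b, Complex.normSq (M b i j) with hddef
  have dnn : ∀ i j, 0 ≤ d i j :=
    fun i j => Finset.sum_nonneg fun b _ => Complex.normSq_nonneg _
  have hmu : ∀ i, mu i = ∑ j, d i j * lam j := by
    intro i
    have h0 := congrArg (fun Q : Matrix m' m' ℂ => Q i i) keyM
    simp only [Matrix.diagonal_apply_eq, Matrix.sum_apply, Function.comp] at h0
    have e1 : ∀ b, (M b * Matrix.diagonal (Complex.ofReal ∘ lam) * (M b)ᴴ) i i
        = ∑ j, ((Complex.normSq (M b i j) * lam j : ℝ) : ℂ) := by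
      intro b
      rw [triple_apply]
      refine Finset.sum_congr rfl fun j _ => ?_
      show M b i j * (Complex.ofReal ∘ lam) j * (starRingEnd ℂ) (M b i j) = _
      rw [mul_comm (M b i j) _, mul_assoc, Complex.mul_conj]
      simp only [Function.comp_apply]
      push_cast
      ring
    rw [Finset.sum_congr rfl (fun b _ => e1 b), Finset.sum_comm] at h0
    have h3 : ((mu i : ℝ) : ℂ) = ((∑ j, d i j * lam j : ℝ) : ℂ) := by
      rw [h0]
      simp only [hddef]
      push_cast
      refine Finset.sum_congr rfl fun j _ => ?_
      rw [Finset.sum_mul]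
    exact_mod_cast h3
  have hrow : ∀ i, ∑ j, d i j = 1 := by
    intro i
    have hMM : ∑ b, M b * (M b)ᴴ = 1 := by
      have e : ∀ b, M b * (M b)ᴴ = W'ᴴ * (D b * (D b)ᴴ) * W' := by
        intro b
        show (W'ᴴ * D b * W) * (W'ᴴ * D b * W)ᴴ = _
        simp only [Matrix.conjTranspose_mul, Matrix.conjTranspose_conjTranspose]
        have expand : W'ᴴ * (D b * ((W * Wᴴ) * ((D b)ᴴ * W'))) = W'ᴴ * (D b * (D b)ᴴ) * W' := by
          rw [hWu, Matrix.one_mul]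
          noncomm_ring
        rw [← expand]
        noncomm_ring
      rw [Finset.sum_congr rfl fun b _ => e b, ← Matrix.sum_mul, ← Matrix.mul_sum, h1,
        Matrix.mul_one, hW'u']
    have h0 := congrArg (fun Q : Matrix m' m' ℂ => Q i i) hMM
    simp only [Matrix.sum_apply, Matrix.one_apply_eq] at h0
    have e2 : ∀ b, (M b * (M b)ᴴ) i i = ∑ j, ((Complex.normSq (M b i j) : ℝ) : ℂ) := by
      intro b
      rw [Matrix.mul_apply]
      refine Finset.sum_congr rfl fun j _ => ?_
      rw [Matrix.conjTranspose_apply]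
      show M b i j * (starRingEnd ℂ) (M b i j) = _
      rw [Complex.mul_conj]
    rw [Finset.sum_congr rfl fun b _ => e2 b, Finset.sum_comm] at h0
    have h3 : ((∑ j, d i j : ℝ) : ℂ) = ((1 : ℝ) : ℂ) := by
      simp only [hddef]
      push_cast
      rw [h0]
    exact_mod_cast h3
  have hcol : ∀ j, ∑ i, d i j = 1 := by
    intro j
    have hMM : ∑ b, (M b)ᴴ * M b = 1 := by
      have e : ∀ b, (M b)ᴴ * M b = Wᴴ * ((D b)ᴴ * D b) * W := by
        intro b
        show (W'ᴴ * D b * W)ᴴ * (W'ᴴ * D b * W) = _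
        simp only [Matrix.conjTranspose_mul, Matrix.conjTranspose_conjTranspose]
        have expand : Wᴴ * ((D b)ᴴ * ((W' * W'ᴴ) * (D b * W))) = Wᴴ * ((D b)ᴴ * D b) * W := by
          rw [hW'u, Matrix.one_mul]
          noncomm_ring
        rw [← expand]
        noncomm_ring
      rw [Finset.sum_congr rfl fun b _ => e b, ← Matrix.sum_mul, ← Matrix.mul_sum, h2,
        Matrix.mul_one, hWu']
    have h0 := congrArg (fun Q : Matrix m' m' ℂ => Q j j) hMM
    simp only [Matrix.sum_apply, Matrix.one_apply_eq] at h0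
    have e2 : ∀ b, ((M b)ᴴ * M b) j j = ∑ i, ((Complex.normSq (M b i j) : ℝ) : ℂ) := by
      intro b
      rw [Matrix.mul_apply]
      refine Finset.sum_congr rfl fun i _ => ?_
      rw [Matrix.conjTranspose_apply]
      show star (M b i j) * M b i j = _
      rw [mul_comm]
      show M b i j * (starRingEnd ℂ) (M b i j) = _
      rw [Complex.mul_conj]
    rw [Finset.sum_congr rfl fun b _ => e2 b, Finset.sum_comm] at h0
    have h3 : ((∑ i, d i j : ℝ) : ℂ) = ((1 : ℝ) : ℂ) := by
      simp only [hddef]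
      push_cast
      rw [h0]
    exact_mod_cast h3
  have hlam : ∀ j, 0 ≤ lam j := hN.eigenvalues_nonneg
  have jensen : ∀ i, ∑ j, d i j * Real.negMulLog (lam j) ≤ Real.negMulLog (mu i) := by
    intro i
    have := Real.concaveOn_negMulLog.le_map_sum (t := Finset.univ) (w := fun j => d i j)
      (p := lam) (fun j _ => dnn i j) (hrow i) (fun j _ => hlam j)
    rw [hmu i]
    simpa [smul_eq_mul] using this
  have eN : vnEntropy N = ∑ j, Real.negMulLog (lam j) := by
    unfold vnEntropy
    rw [dif_pos hNh]
  have eN' : vnEntropy N' = ∑ i, Real.negMulLog (mu i) := by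
    unfold vnEntropy
    rw [dif_pos hN']
  rw [eN, eN']
  calc ∑ j, Real.negMulLog (lam j) = ∑ j, (∑ i, d i j) * Real.negMulLog (lam j) := by
        refine Finset.sum_congr rfl fun j _ => ?_
        rw [hcol j, one_mul]
    _ = ∑ i, ∑ j, d i j * Real.negMulLog (lam j) := by
        rw [Finset.sum_comm]
        exact Finset.sum_congr rfl fun j _ => by rw [Finset.sum_mul]
    _ ≤ ∑ i, Real.negMulLog (mu i) := Finset.sum_le_sum fun i _ => jensen i

end part3'
section part4'
open Matrix


set_option maxHeartbeats 1000000

lemma main_half {α β m' : Type*} [Fintype α] [DecidableEq α] [Fintype β] [DecidableEq β]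
    [Fintype m'] [DecidableEq m']
    (x : m' → α → ℂ) (y : m' → β → ℂ)
    (hy : ∀ j, ∑ b, y j b * (starRingEnd ℂ) (y j b) = 1)
    (ρ : Matrix (α × β) (α × β) ℂ)
    (hρ : ∀ a b a' b', ρ (a, b) (a', b') =
      ∑ j, x j a * y j b * (starRingEnd ℂ) (x j a') * (starRingEnd ℂ) (y j b')) :
    vnEntropy (ptraceSnd ρ) ≤ vnEntropy ρ := by
  classical
  set Z : Matrix (α × β) m' ℂ := Matrix.of (fun p j => x j p.1 * y j p.2) with hZdef
  set U : Matrix α m' ℂ := Matrix.of (fun a j => x j a) with hUdef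
  have hZa : ∀ p j, Z p j = x j p.1 * y j p.2 := fun p j => rfl
  have hUa : ∀ a j, U a j = x j a := fun a j => rfl
  have hZ : ρ = Z * Zᴴ := by
    ext ⟨a, b⟩ ⟨a', b'⟩
    rw [Matrix.mul_apply, hρ]
    refine Finset.sum_congr rfl fun j _ => ?_
    rw [Matrix.conjTranspose_apply, hZa, hZa]
    simp only [Complex.star_def, _root_.map_mul]
    ring
  have hTr : ptraceSnd ρ = U * Uᴴ := by
    ext a a'
    show ∑ b, ρ (a, b) (a', b) = (U * Uᴴ) a a'
    rw [Matrix.mul_apply]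
    calc ∑ b, ρ (a, b) (a', b)
        = ∑ b, ∑ j, x j a * y j b * (starRingEnd ℂ) (x j a') * (starRingEnd ℂ) (y j b) := by
          exact Finset.sum_congr rfl fun b _ => hρ a b a' b
      _ = ∑ j, ∑ b, (x j a * (starRingEnd ℂ) (x j a')) * (y j b * (starRingEnd ℂ) (y j b)) := by
          rw [Finset.sum_comm]
          exact Finset.sum_congr rfl fun j _ => Finset.sum_congr rfl fun b _ => by ring
      _ = ∑ j, (x j a * (starRingEnd ℂ) (x j a')) := by
          refine Finset.sum_congr rfl fun j _ => ?_
          rw [← Finset.mul_sum, hy j, mul_one]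
      _ = ∑ j, U a j * Uᴴ j a' := by
          refine Finset.sum_congr rfl fun j _ => ?_
          rw [Matrix.conjTranspose_apply, hUa, hUa]
          rfl
  have e1 : vnEntropy (ptraceSnd ρ) = vnEntropy (Uᴴ * U) := by
    rw [hTr, vnEntropy_mul_conjTranspose]
  have e2 : vnEntropy ρ = vnEntropy (Zᴴ * Z) := by
    rw [hZ, vnEntropy_mul_conjTranspose]
  rw [e1, e2]
  refine vnEntropy_le_core (Uᴴ * U) (Zᴴ * Z) (Matrix.posSemidef_conjTranspose_mul_self U)
    (Matrix.isHermitian_conjTranspose_mul_self Z)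
    (fun b => Matrix.diagonal (fun j => (starRingEnd ℂ) (y j b))) ?_ ?_ ?_
  · -- hsum
    ext j k
    rw [Matrix.sum_apply]
    have eb : ∀ b, (Matrix.diagonal (fun j => (starRingEnd ℂ) (y j b)) * (Uᴴ * U) *
        (Matrix.diagonal (fun j => (starRingEnd ℂ) (y j b)))ᴴ) j k
        = (starRingEnd ℂ) (y j b) * (Uᴴ * U) j k * y k b := by
      intro b
      rw [Matrix.diagonal_conjTranspose, Matrix.mul_apply]
      rw [Finset.sum_eq_single k]
      · rw [Matrix.diagonal_mul, Matrix.diagonal_apply_eq]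
        simp only [Pi.star_apply, Complex.star_def, Complex.conj_conj]
        try ring
      · intro l _ hl
        rw [Matrix.diagonal_apply_ne _ hl, mul_zero]
      · intro h
        exact absurd (Finset.mem_univ k) h
    rw [Finset.sum_congr rfl fun b _ => eb b]
    rw [Matrix.mul_apply]
    have eU : (Uᴴ * U) j k = ∑ a, (starRingEnd ℂ) (x j a) * x k a := by
      rw [Matrix.mul_apply]
      exact Finset.sum_congr rfl fun a _ => by
        rw [Matrix.conjTranspose_apply, hUa, hUa]; rfl
    calc ∑ p : α × β, Zᴴ j p * Z p k
        = ∑ a, ∑ b, ((starRingEnd ℂ) (x j a) * x k a) * ((starRingEnd ℂ) (y j b) * y k b) := by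
          rw [Fintype.sum_prod_type]
          refine Finset.sum_congr rfl fun a _ => Finset.sum_congr rfl fun b _ => ?_
          rw [Matrix.conjTranspose_apply, hZa, hZa]
          simp only [Complex.star_def, _root_.map_mul]
          ring
      _ = ∑ b, ∑ a, ((starRingEnd ℂ) (x j a) * x k a) * ((starRingEnd ℂ) (y j b) * y k b) :=
          Finset.sum_comm
      _ = ∑ b, (starRingEnd ℂ) (y j b) * (Uᴴ * U) j k * y k b := by
          refine Finset.sum_congr rfl fun b _ => ?_
          rw [eU, ← Finset.sum_mul]
          ring
  · -- h1
    have eD : ∀ b, (Matrix.diagonal (fun j => (starRingEnd ℂ) (y j b))) *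
        (Matrix.diagonal (fun j => (starRingEnd ℂ) (y j b)))ᴴ
        = Matrix.diagonal (fun j => y j b * (starRingEnd ℂ) (y j b)) := by
      intro b
      rw [Matrix.diagonal_conjTranspose, Matrix.diagonal_mul_diagonal]
      refine congrArg Matrix.diagonal (funext fun j => ?_)
      simp only [Pi.mul_apply, Pi.star_apply, Complex.star_def, Complex.conj_conj]
      try ring
    rw [Finset.sum_congr rfl fun b _ => eD b]
    ext j k
    rw [Matrix.sum_apply]
    by_cases h : j = k
    · subst h
      simp only [Matrix.diagonal_apply_eq, Matrix.one_apply_eq]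
      exact hy j
    · simp only [Matrix.diagonal_apply_ne _ h, Matrix.one_apply_ne h, Finset.sum_const_zero]
  · -- h2
    have eD : ∀ b, (Matrix.diagonal (fun j => (starRingEnd ℂ) (y j b)))ᴴ *
        (Matrix.diagonal (fun j => (starRingEnd ℂ) (y j b)))
        = Matrix.diagonal (fun j => y j b * (starRingEnd ℂ) (y j b)) := by
      intro b
      rw [Matrix.diagonal_conjTranspose, Matrix.diagonal_mul_diagonal]
      refine congrArg Matrix.diagonal (funext fun j => ?_)
      simp only [Pi.mul_apply, Pi.star_apply, Complex.star_def, Complex.conj_conj]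
      try ring
    rw [Finset.sum_congr rfl fun b _ => eD b]
    ext j k
    rw [Matrix.sum_apply]
    by_cases h : j = k
    · subst h
      simp only [Matrix.diagonal_apply_eq, Matrix.one_apply_eq]
      exact hy j
    · simp only [Matrix.diagonal_apply_ne _ h, Matrix.one_apply_ne h, Finset.sum_const_zero]
end part4'
section part5'
open Matrix Kronecker


set_option maxHeartbeats 1600000

theorem aux_final {α β : Type*} [Fintype α] [DecidableEq α] [Fintype β] [DecidableEq β]
    (ρ : Matrix (α × β) (α × β) ℂ) (hρ : IsDensity ρ) (hsep : IsSeparable ρ) :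
    vnEntropy (ptraceSnd ρ) ≤ vnEntropy ρ ∧ vnEntropy (ptraceFst ρ) ≤ vnEntropy ρ := by
  classical
  obtain ⟨n, q, σ, τ, hq0, hq1, hσ, hτ, hrep⟩ := hsep
  set eσ : Fin n → α → ℝ := fun k => ((hσ k).1.1).eigenvalues with heσ
  set eτ : Fin n → β → ℝ := fun k => ((hτ k).1.1).eigenvalues with heτ
  set Wm : Fin n → Matrix α α ℂ := fun k => (((hσ k).1.1).eigenvectorUnitary : Matrix α α ℂ)
    with hWm
  set Vm : Fin n → Matrix β β ℂ := fun k => (((hτ k).1.1).eigenvectorUnitary : Matrix β β ℂ)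
    with hVm
  set p : (Fin n × α × β) → ℝ := fun j => Real.sqrt (q j.1 * eσ j.1 j.2.1 * eτ j.1 j.2.2)
    with hp
  set w : (Fin n × α × β) → α → ℂ := fun j a => Wm j.1 a j.2.1 with hw
  set v : (Fin n × α × β) → β → ℂ := fun j b => Vm j.1 b j.2.2 with hv
  -- entrywise spectral decomposition of the factors
  have hσspec : ∀ k a a', σ k a a' =
      ∑ c, Wm k a c * ((eσ k c : ℝ) : ℂ) * (starRingEnd ℂ) (Wm k a' c) := by
    intro k a a'
    have h0 := congrArg (fun M : Matrix α α ℂ => M a a') ((hσ k).1.1).spectral_theorem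
    simp only [Unitary.conjStarAlgAut_apply] at h0
    rw [Matrix.star_eq_conjTranspose, triple_apply] at h0
    exact h0
  have hτspec : ∀ k b b', τ k b b' =
      ∑ d, Vm k b d * ((eτ k d : ℝ) : ℂ) * (starRingEnd ℂ) (Vm k b' d) := by
    intro k b b'
    have h0 := congrArg (fun M : Matrix β β ℂ => M b b') ((hτ k).1.1).spectral_theorem
    simp only [Unitary.conjStarAlgAut_apply] at h0
    rw [Matrix.star_eq_conjTranspose, triple_apply] at h0
    exact h0
  have hpsq : ∀ j : Fin n × α × β,
      ((p j : ℝ) : ℂ) * ((p j : ℝ) : ℂ) = ((q j.1 * eσ j.1 j.2.1 * eτ j.1 j.2.2 : ℝ) : ℂ) := by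
    intro j
    rw [← Complex.ofReal_mul]
    congr 1
    refine Real.mul_self_sqrt ?_
    have h1 : 0 ≤ q j.1 := hq0 j.1
    have h2 : 0 ≤ eσ j.1 j.2.1 := ((hσ j.1).1).eigenvalues_nonneg j.2.1
    have h3 : 0 ≤ eτ j.1 j.2.2 := ((hτ j.1).1).eigenvalues_nonneg j.2.2
    positivity
  have hdec : ∀ a b a' b', ρ (a, b) (a', b') =
      ∑ j : Fin n × α × β, (((p j : ℝ) : ℂ) * ((p j : ℝ) : ℂ)) *
        (w j a * (starRingEnd ℂ) (w j a')) * (v j b * (starRingEnd ℂ) (v j b')) := by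
    intro a b a' b'
    have h0 := congrArg (fun M : Matrix (α × β) (α × β) ℂ => M (a, b) (a', b')) hrep
    simp only [Matrix.sum_apply, Matrix.smul_apply, Matrix.kroneckerMap_apply,
      smul_eq_mul] at h0
    rw [h0, Fintype.sum_prod_type]
    refine Finset.sum_congr rfl fun k _ => ?_
    rw [Fintype.sum_prod_type]
    simp only [hpsq, hw, hv]
    rw [hσspec k a a', hτspec k b b', Finset.sum_mul_sum, Finset.mul_sum]
    refine Finset.sum_congr rfl fun c _ => ?_
    rw [Finset.mul_sum]
    refine Finset.sum_congr rfl fun d _ => ?_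
    push_cast
    ring
  have hwcol : ∀ j : Fin n × α × β, ∑ a, w j a * (starRingEnd ℂ) (w j a) = 1 := by
    intro j
    have hu : (Wm j.1)ᴴ * (Wm j.1) = 1 := by
      have := (Matrix.mem_unitaryGroup_iff').mp ((hσ j.1).1.1).eigenvectorUnitary.2
      rwa [Matrix.star_eq_conjTranspose] at this
    have h0 := congrArg (fun M : Matrix α α ℂ => M j.2.1 j.2.1) hu
    simp only [Matrix.mul_apply, Matrix.conjTranspose_apply, Matrix.one_apply_eq] at h0
    rw [← h0]
    refine Finset.sum_congr rfl fun a _ => ?_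
    simp only [hw]
    exact mul_comm _ _
  have hvcol : ∀ j : Fin n × α × β, ∑ b, v j b * (starRingEnd ℂ) (v j b) = 1 := by
    intro j
    have hu : (Vm j.1)ᴴ * (Vm j.1) = 1 := by
      have := (Matrix.mem_unitaryGroup_iff').mp ((hτ j.1).1.1).eigenvectorUnitary.2
      rwa [Matrix.star_eq_conjTranspose] at this
    have h0 := congrArg (fun M : Matrix β β ℂ => M j.2.2 j.2.2) hu
    simp only [Matrix.mul_apply, Matrix.conjTranspose_apply, Matrix.one_apply_eq] at h0
    rw [← h0]
    refine Finset.sum_congr rfl fun b _ => ?_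
    simp only [hv]
    exact mul_comm _ _
  have hermρ : ρ.IsHermitian := hρ.1.1
  have half1 : vnEntropy (ptraceSnd ρ) ≤ vnEntropy ρ := by
    refine main_half (fun j a => ((p j : ℝ) : ℂ) * w j a) v hvcol ρ ?_
    intro a b a' b'
    rw [hdec a b a' b']
    refine Finset.sum_congr rfl fun j _ => ?_
    simp only [_root_.map_mul, Complex.conj_ofReal]
    ring
  have half2 : vnEntropy (ptraceFst ρ) ≤ vnEntropy ρ := by
    set e : β × α ≃ α × β := Equiv.prodComm β α with he
    have hsub : ptraceFst ρ = ptraceSnd (ρ.submatrix e e) := by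
      ext i j
      rfl
    have hent : vnEntropy (ρ.submatrix e e) = vnEntropy ρ := vnEntropy_submatrix e ρ hermρ
    rw [hsub, ← hent]
    refine main_half (fun j b => ((p j : ℝ) : ℂ) * v j b) w hwcol (ρ.submatrix e e) ?_
    intro b a b' a'
    show ρ (a, b) (a', b') = _
    rw [hdec a b a' b']
    refine Finset.sum_congr rfl fun j _ => ?_
    simp only [_root_.map_mul, Complex.conj_ofReal]
    ring
  exact ⟨half1, half2⟩
end part5'

end QCap

open QCap Matrix in
/-- for a separable bipartite state the local entropies do not
exceed the global entropy. -/
theorem local_entropy_le_of_separable {α β : Type*} [Fintype α] [DecidableEq α]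
    [Fintype β] [DecidableEq β]
    (ρ : Matrix (α × β) (α × β) ℂ) (hρ : IsDensity ρ) (hsep : IsSeparable ρ) :
    vnEntropy (ptraceSnd ρ) ≤ vnEntropy ρ ∧ vnEntropy (ptraceFst ρ) ≤ vnEntropy ρ :=
  QCap.aux_final ρ hρ hsep
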